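/- For any word w with ι(w) = k and any s ∈ ℕ, k ≤ ι(w^s) − ι(w^{s−1}) ≤ k + 1. -/

import Mathlib

open List

variable {α : Type*}

/-- `w` is `k`-universal: every word of length `k` over the alphabet `α`
is a scattered factor (subsequence) of `w`. -/
def IsUniversal [Fintype α] (k : ℕ) (w : List α) : Prop :=
  ∀ u : List α, u.length = k → u.Sublist w

/-- The universality index `ι(w)`: the largest `k` such that `w` is `k`-universal. -/
noncomputable def univIndex [Fintype α] (w : List α) : ℕ :=
  sSup {k | IsUniversal k w}

/-- The circular universality index `ζ(w)`: the largest `k` such that some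
conjugate of `w` is `k`-universal. -/
noncomputable def circIndex [Fintype α] (w : List α) : ℕ :=
  sSup {k | ∃ u v : List α, w = u ++ v ∧ IsUniversal k (v ++ u)}

/-- `wpow w s = w^s`, the `s`-fold concatenation of `w`. -/
def wpow (w : List α) (s : ℕ) : List α := (List.replicate s w).flatten

/-- Auxiliary (fuelled) computation of the remainder of the arch factorisation:
greedily remove the shortest prefix containing every letter of the alphabet. -/
def remAux [Fintype α] [DecidableEq α] : ℕ → List α → List α
  | 0, w => w
  | (n+1), w =>
    match (List.range' 1 w.length).find?
        (fun m => decide ((w.take m).toFinset = Finset.univ)) with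
    | none => w
    | some m => remAux n (w.drop m)

/-- `rem w = r(w)`, the remainder of the arch factorisation of `w`. -/
def rem [Fintype α] [DecidableEq α] (w : List α) : List α := remAux w.length w

/-- Auxiliary (fuelled) computation of the list of arches of `w`. -/
def archesAux [Fintype α] [DecidableEq α] : ℕ → List α → List (List α)
  | 0, _ => []
  | (n+1), w =>
    match (List.range' 1 w.length).find?
        (fun m => decide ((w.take m).toFinset = Finset.univ)) with
    | none => []
    | some m => (w.take m) :: archesAux n (w.drop m)

/-- `arches w`: the list `[arch₁(w), …, arch_{ι(w)}(w)]` of arches of `w`. -/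
def arches [Fintype α] [DecidableEq α] (w : List α) : List (List α) :=
  archesAux w.length w

section AuxLemmas

variable [Fintype α]

lemma isUniversal_zero' (w : List α) : IsUniversal 0 w := by
  intro u hu
  rw [List.length_eq_zero_iff] at hu
  subst hu
  exact List.nil_sublist w

lemma isUniversal_le_length' [Nonempty α] {k : ℕ} {w : List α}
    (h : IsUniversal k w) : k ≤ w.length := by
  obtain ⟨a⟩ := ‹Nonempty α›
  simpa using (h (List.replicate k a) (by simp)).length_le

lemma bddAbove_univSet' [Nonempty α] (w : List α) :
    BddAbove {k | IsUniversal k w} :=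
  ⟨w.length, fun _ hk => isUniversal_le_length' hk⟩

lemma isUniversal_univIndex' [Nonempty α] (w : List α) :
    IsUniversal (univIndex w) w :=
  Nat.sSup_mem ⟨0, isUniversal_zero' w⟩ (bddAbove_univSet' w)

lemma le_univIndex' [Nonempty α] {k : ℕ} {w : List α} (h : IsUniversal k w) :
    k ≤ univIndex w :=
  le_csSup (bddAbove_univSet' w) h

lemma isUniversal_mono' [Nonempty α] {j k : ℕ} {w : List α} (hjk : j ≤ k)
    (h : IsUniversal k w) : IsUniversal j w := by
  obtain ⟨a⟩ := ‹Nonempty α›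
  intro u hu
  have h2 := h (u ++ List.replicate (k - j) a) (by simp [hu]; omega)
  exact (List.sublist_append_left u _).trans h2

lemma not_isUniversal_succ' [Nonempty α] (w : List α) :
    ¬ IsUniversal (univIndex w + 1) w := fun h => by
  have := le_univIndex' h; omega

lemma isUniversal_append' {a b : ℕ} {x y : List α}
    (hx : IsUniversal a x) (hy : IsUniversal b y) :
    IsUniversal (a + b) (x ++ y) := by
  intro u hu
  have h1 := hx (u.take a) (by simp [hu])
  have h2 := hy (u.drop a) (by simp [hu])
  simpa using List.Sublist.append h1 h2

lemma univIndex_append_le' [Nonempty α] (x y : List α) :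
    univIndex (x ++ y) ≤ univIndex x + univIndex y + 1 := by
  by_contra h
  push_neg at h
  have hU : IsUniversal (univIndex x + 1 + (univIndex y + 1)) (x ++ y) :=
    isUniversal_mono' (by omega) (isUniversal_univIndex' (x ++ y))
  obtain ⟨wx, hwx, hnx⟩ : ∃ u : List α, u.length = univIndex x + 1 ∧ ¬ u.Sublist x := by
    have := not_isUniversal_succ' x
    simpa [IsUniversal] using this
  obtain ⟨wy, hwy, hny⟩ : ∃ u : List α, u.length = univIndex y + 1 ∧ ¬ u.Sublist y := by
    have := not_isUniversal_succ' y
    simpa [IsUniversal] using this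
  have hsub : (wx ++ wy).Sublist (x ++ y) := hU _ (by simp [hwx, hwy])
  rw [List.sublist_append_iff] at hsub
  obtain ⟨p, q, hpq, hp, hq⟩ := hsub
  rcases List.append_eq_append_iff.mp hpq with ⟨a', hp', _⟩ | ⟨c', _, hq'⟩
  · exact hnx (((List.sublist_append_left wx a').trans (hp' ▸ List.Sublist.refl p)).trans hp)
  · exact hny (((List.sublist_append_right c' wy).trans (hq' ▸ List.Sublist.refl q)).trans hq)

end AuxLemmas
theorem univIndex_pow_growth_bounds [Fintype α] (w : List α) (k : ℕ)
    (hk : univIndex w = k) (s : ℕ) (hs : 1 ≤ s) :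
    univIndex (wpow w (s - 1)) + k ≤ univIndex (wpow w s) ∧
      univIndex (wpow w s) ≤ univIndex (wpow w (s - 1)) + k + 1 := by
  rcases isEmpty_or_nonempty α with hα | hα
  · have hw : w = [] := by
      cases w with
      | nil => rfl
      | cons a _ => exact (IsEmpty.false a).elim
    subst hw
    have hpow : ∀ n : ℕ, wpow ([] : List α) n = [] := by
      intro n; simp [wpow]
    have hset : {k | IsUniversal k ([] : List α)} = Set.univ := by
      ext m
      simp only [Set.mem_setOf_eq, Set.mem_univ, iff_true]
      intro u _
      cases u with
      | nil => exact List.Sublist.refl []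
      | cons a _ => exact (IsEmpty.false a).elim
    have h0 : univIndex ([] : List α) = 0 := by
      have hnb : ¬ BddAbove (Set.univ : Set ℕ) := by
        rintro ⟨n, hn⟩
        have := hn (Set.mem_univ (n + 1))
        omega
      rw [univIndex, hset, csSup_of_not_bddAbove hnb, csSup_empty]
      rfl
    rw [hpow, hpow, h0]
    rw [h0] at hk
    omega
  · have hws : wpow w s = w ++ wpow w (s - 1) := by
      cases s with
      | zero => omega
      | succ n => simp [wpow, List.replicate_succ]
    constructor
    · have := le_univIndex' (isUniversal_append'
        (isUniversal_univIndex' w) (isUniversal_univIndex' (wpow w (s - 1))))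
      rw [← hws] at this
      omega
    · have := univIndex_append_le' w (wpow w (s - 1))
      rw [← hws] at this
      omega
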